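/- Let S be a complex structure on ℍ^{n+1} and let W = {v ∈ ℍ^{n+1} : S(v) = v·i} be its +i eigenspace. Then W is a complex subspace of ℍ^{n+1} (for the complex structure given by right scalar multiplication by i), W has complex dimension n+1, and ℍ^{n+1} decomposes as the direct sum of complex subspaces ℍ^{n+1} = W ⊕ W·j. -/

import Mathlib

open Quaternion MulOpposite Module

/-- The quaternion `i`. -/
def quatI : ℍ[ℝ] := ⟨0, 1, 0, 0⟩

/-- The quaternion `j`. -/
def quatJ : ℍ[ℝ] := ⟨0, 0, 1, 0⟩

/-- Componentwise right multiplication by a fixed quaternion `q` on `ℍ^m`, as an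
`ℝ`-linear map. -/
noncomputable def qRightMul (m : ℕ) (q : ℍ[ℝ]) : (Fin m → ℍ[ℝ]) →ₗ[ℝ] (Fin m → ℍ[ℝ]) where
  toFun v := fun idx => v idx * q
  map_add' v w := by funext idx; simp [add_mul]
  map_smul' r v := by funext idx; simp [smul_mul_assoc]

lemma qr_apply (m : ℕ) (q : ℍ[ℝ]) (v : Fin m → ℍ[ℝ]) (idx : Fin m) :
    qRightMul m q v idx = v idx * q := rfl

lemma qr_qr (m : ℕ) (p q : ℍ[ℝ]) (v : Fin m → ℍ[ℝ]) :
    qRightMul m p (qRightMul m q v) = qRightMul m (q * p) v := by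
  funext idx; simp [qr_apply, mul_assoc]

lemma qr_eq_op_smul (m : ℕ) (q : ℍ[ℝ]) (v : Fin m → ℍ[ℝ]) :
    qRightMul m q v = op q • v := by
  funext idx
  simp [qr_apply, op_smul_eq_mul]

lemma qr_one (m : ℕ) (v : Fin m → ℍ[ℝ]) : qRightMul m 1 v = v := by
  funext idx; simp [qr_apply]

lemma qr_neg (m : ℕ) (q : ℍ[ℝ]) (v : Fin m → ℍ[ℝ]) :
    qRightMul m (-q) v = -(qRightMul m q v) := by
  funext idx; simp [qr_apply]

lemma qr_add (m : ℕ) (p q : ℍ[ℝ]) (v : Fin m → ℍ[ℝ]) :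
    qRightMul m (p + q) v = qRightMul m p v + qRightMul m q v := by
  funext idx; simp [qr_apply, mul_add]

lemma quatII : quatI * quatI = -1 := by ext <;> simp [Quaternion.re_mul, Quaternion.imI_mul, Quaternion.imJ_mul, Quaternion.imK_mul] <;> simp [quatI]
lemma quatJJ : quatJ * quatJ = -1 := by ext <;> simp [Quaternion.re_mul, Quaternion.imI_mul, Quaternion.imJ_mul, Quaternion.imK_mul] <;> simp [quatJ]
lemma quatIJ : quatI * quatJ = -(quatJ * quatI) := by ext <;> simp [Quaternion.re_mul, Quaternion.imI_mul, Quaternion.imJ_mul, Quaternion.imK_mul] <;> simp [quatI, quatJ]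
lemma quatK_ne : quatI * quatJ ≠ 0 := by
  simp [Quaternion.ext_iff, Quaternion.re_mul, Quaternion.imI_mul, Quaternion.imJ_mul, Quaternion.imK_mul] <;> simp [quatI, quatJ]

noncomputable def rmJ (m : ℕ) : (Fin m → ℍ[ℝ]) ≃ₗ[ℝ] (Fin m → ℍ[ℝ]) :=
  LinearEquiv.ofLinear (qRightMul m quatJ) (qRightMul m (-quatJ))
    (LinearMap.ext fun v => by
      rw [LinearMap.comp_apply, qr_qr, neg_mul, quatJJ, neg_neg, qr_one, LinearMap.id_apply])
    (LinearMap.ext fun v => by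
      rw [LinearMap.comp_apply, qr_qr, mul_neg, quatJJ, neg_neg, qr_one, LinearMap.id_apply])

/-- Let `S` be a complex structure on `ℍ^{n+1}` and `W = {v : S v = v·i}` its `+i`
eigenspace.  Then `W` is a complex subspace for the complex structure given by right
multiplication by `i`, of complex dimension `n+1` (real dimension `2(n+1)`), the
subspace `W·j` is also a complex subspace, and `ℍ^{n+1} = W ⊕ W·j`. -/
theorem eigenspace_decomposition_of_complex_structure (n : ℕ)
    (S : (Fin (n + 1) → ℍ[ℝ]) →ₗ[(ℍ[ℝ])ᵐᵒᵖ] (Fin (n + 1) → ℍ[ℝ]))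
    (hS : ∀ v, S (S v) = -v)
    (W : Submodule ℝ (Fin (n + 1) → ℍ[ℝ]))
    (hW : ∀ v, v ∈ W ↔ S v = qRightMul (n + 1) quatI v) :
    (∀ v ∈ W, qRightMul (n + 1) quatI v ∈ W) ∧
    finrank ℝ W = 2 * (n + 1) ∧
    (∀ v ∈ W.map (qRightMul (n + 1) quatJ),
      qRightMul (n + 1) quatI v ∈ W.map (qRightMul (n + 1) quatJ)) ∧
    IsCompl W (W.map (qRightMul (n + 1) quatJ)) := by
  have hcomm : ∀ (q : ℍ[ℝ]) v, S (qRightMul (n + 1) q v) = qRightMul (n + 1) q (S v) := by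
    intro q v
    rw [qr_eq_op_smul, qr_eq_op_smul, map_smul]
  have h1 : ∀ v ∈ W, qRightMul (n + 1) quatI v ∈ W := by
    intro v hv
    rw [hW] at hv ⊢
    rw [hcomm, hv]
  have h3 : ∀ v ∈ W.map (qRightMul (n + 1) quatJ),
      qRightMul (n + 1) quatI v ∈ W.map (qRightMul (n + 1) quatJ) := by
    rintro _ ⟨u, hu, rfl⟩
    refine ⟨-(qRightMul (n + 1) quatI u), W.neg_mem (h1 u hu), ?_⟩
    rw [map_neg, qr_qr, qr_qr, quatIJ, qr_neg, neg_neg]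
  -- disjointness
  have hdisj : Disjoint W (W.map (qRightMul (n + 1) quatJ)) := by
    rw [Submodule.disjoint_def]
    rintro x hxW ⟨u, hu, rfl⟩
    have e1 : S (qRightMul (n + 1) quatJ u) = qRightMul (n + 1) (quatI * quatJ) u := by
      rw [hcomm, (hW u).1 hu, qr_qr]
    have e2 : S (qRightMul (n + 1) quatJ u) = qRightMul (n + 1) (quatJ * quatI) u := by
      rw [(hW _).1 hxW, qr_qr]
    have hu0 : u = 0 := by
      funext idx
      have h4 := congrFun (e1.symm.trans e2) idx
      rw [qr_apply, qr_apply, quatIJ, mul_neg] at h4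
      have h5 : u idx * (quatJ * quatI) = 0 := by haveI := IsAddTorsionFree.of_module_rat ℍ[ℝ]; exact neg_eq_self.1 h4
      rcases mul_eq_zero.1 h5 with h | h
      · exact h
      · exact absurd h (by simp [Quaternion.ext_iff, Quaternion.re_mul, Quaternion.imI_mul, Quaternion.imJ_mul, Quaternion.imK_mul] <;> simp [quatI, quatJ])
    simp [hu0]
  -- codisjointness
  have hcodisj : Codisjoint W (W.map (qRightMul (n + 1) quatJ)) := by
    rw [codisjoint_iff, Submodule.eq_top_iff']
    intro v
    set X := qRightMul (n + 1) quatI (S v) with hX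
    have ha2 : v - X ∈ W := by
      rw [hW, map_sub, hcomm, hS, map_neg, map_sub, hX, qr_qr, quatII]
      rw [qr_neg, qr_one]
      abel
    have hb2 : v + X ∈ W.map (qRightMul (n + 1) quatJ) := by
      refine ⟨qRightMul (n + 1) (-quatJ) (v + X), ?_, by
        rw [qr_qr, neg_mul, quatJJ, neg_neg, qr_one]⟩
      simp only [SetLike.mem_coe]
      rw [hW, hcomm, map_add, hcomm, hS, map_neg, hX, qr_qr]
      have c1 : quatI * (-quatJ * quatI) = -quatJ := by ext <;> simp [Quaternion.re_mul, Quaternion.imI_mul, Quaternion.imJ_mul, Quaternion.imK_mul] <;> simp [quatI, quatJ]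
      have c2 : -quatJ * quatI = -(quatI * -quatJ) := by ext <;> simp [Quaternion.re_mul, Quaternion.imI_mul, Quaternion.imJ_mul, Quaternion.imK_mul] <;> simp [quatI, quatJ]
      rw [map_add, map_add, map_neg, qr_qr, qr_qr, c1, c2, qr_neg, qr_neg]
      abel
    have key : v = (2:ℝ)⁻¹ • (v - X) + (2:ℝ)⁻¹ • (v + X) := by
      rw [← smul_add, sub_add_add_cancel, ← two_smul ℝ v, smul_smul]
      norm_num
    rw [key]
    exact Submodule.add_mem _
      (Submodule.mem_sup_left (W.smul_mem _ ha2))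
      (Submodule.mem_sup_right (Submodule.smul_mem _ _ hb2))
  have hcompl : IsCompl W (W.map (qRightMul (n + 1) quatJ)) := ⟨hdisj, hcodisj⟩
  -- dimension count
  have hrankmap : finrank ℝ (W.map (qRightMul (n + 1) quatJ)) = finrank ℝ W := by
    have : W.map (qRightMul (n + 1) quatJ) = W.map (rmJ (n + 1) : (Fin (n+1) → ℍ[ℝ]) →ₗ[ℝ] (Fin (n+1) → ℍ[ℝ])) := rfl
    rw [this, LinearEquiv.finrank_map_eq]
  have htot : finrank ℝ (Fin (n + 1) → ℍ[ℝ]) = 4 * (n + 1) := by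
    rw [Module.finrank_pi_fintype, Finset.sum_const]
    simp [Quaternion.finrank_eq_four, mul_comm]
  have hsum := Submodule.finrank_add_eq_of_isCompl hcompl
  rw [hrankmap, htot] at hsum
  exact ⟨h1, by omega, h3, hcompl⟩
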